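/- Every subset of the circle C = {(z,0) : |z|=1} ⊂ ∂𝔹₂ that supports a probability measure has capacity zero with respect to the kernel |K(z,w)| = |1 − ⟨z,w⟩|^{−1}: more precisely, for every probability measure ν supported on C, sup_{0≤r<1} ∫∫ |1 − r²⟨z,w⟩|^{−1} dν(w) dν(z) = ∞. -/

import Mathlib

open MeasureTheory Complex
open scoped ENNReal

local notation "⟪" x ", " y "⟫" => @inner ℂ _ _ x y

noncomputable instance (d : ℕ) : MeasurableSpace (EuclideanSpace ℂ (Fin d)) := borel _
instance (d : ℕ) : BorelSpace (EuclideanSpace ℂ (Fin d)) := ⟨rfl⟩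

/-- The circle `C = {(z,0) : |z| = 1} ⊆ ∂𝔹₂`. -/
noncomputable def circleC : Set (EuclideanSpace ℂ (Fin 2)) :=
  (fun z : ℂ => (EuclideanSpace.equiv (Fin 2) ℂ).symm ![z, 0]) '' Metric.sphere (0 : ℂ) 1

set_option maxHeartbeats 1000000

noncomputable def cb (n : ℕ) : ℝ := (n.centralBinom : ℝ) / 4 ^ n

lemma cb_zero : cb 0 = 1 := by simp [cb, Nat.centralBinom_zero]

lemma cb_pos (n : ℕ) : 0 < cb n := by
  have h := Nat.centralBinom_pos n
  have : (0:ℝ) < n.centralBinom := by exact_mod_cast h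
  have h4 : (0:ℝ) < 4 ^ n := by positivity
  exact div_pos this h4

lemma cb_rec (n : ℕ) : 2 * (n + 1 : ℝ) * cb (n + 1) = (2 * n + 1) * cb n := by
  have h := Nat.succ_mul_centralBinom_succ n
  have h' : ((n + 1) * Nat.centralBinom (n + 1) : ℝ) = 2 * (2 * n + 1) * Nat.centralBinom n := by
    exact_mod_cast congrArg (Nat.cast : ℕ → ℝ) h
  have h4 : (4:ℝ) ^ (n+1) = 4 * 4 ^ n := by ring
  simp only [cb]
  field_simp [cb, h4] at h' ⊢
  rw [h4]
  nlinarith [h', pow_pos (show (0:ℝ) < 4 by norm_num) n]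

lemma cb_le_one (n : ℕ) : cb n ≤ 1 := by
  induction n with
  | zero => simp [cb_zero]
  | succ n ih =>
    have hrec := cb_rec n
    have hp := cb_pos n
    nlinarith

lemma cb_sum (n : ℕ) : ∑ k ∈ Finset.range (n + 1), cb k = (2 * n + 1) * cb n := by
  induction n with
  | zero => simp [cb_zero]
  | succ n ih =>
    rw [Finset.sum_range_succ, ih]
    have := cb_rec n
    push_cast
    nlinarith

lemma cb_sq_ge (n : ℕ) (hn : 1 ≤ n) : 1 / (4 * n) ≤ cb n ^ 2 := by
  induction n with
  | zero => omega
  | succ n ih =>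
    rcases Nat.eq_or_lt_of_le hn with h | h
    · have : n = 0 := by omega
      subst this
      have h1 : cb 1 = 1 / 2 := by
        have := cb_rec 0
        rw [cb_zero] at this
        norm_num at this
        linarith
      rw [h1]; norm_num
    · have hn' : 1 ≤ n := by omega
      have ih' := ih hn'
      have hrec := cb_rec n
      have hp := cb_pos n
      have hp' := cb_pos (n + 1)
      have hnR : (1:ℝ) ≤ (n:ℝ) := by exact_mod_cast hn'
      have ih'' : 1 ≤ cb n ^ 2 * (4 * (n:ℝ)) := by
        rw [div_le_iff₀ (by positivity : (0:ℝ) < 4 * (n:ℝ))] at ih'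
        linarith
      have h3sq : (2 * ((n:ℝ) + 1)) ^ 2 * cb (n + 1) ^ 2 = (2 * (n:ℝ) + 1) ^ 2 * cb n ^ 2 := by
        have := congrArg (· ^ 2) hrec
        simpa [mul_pow] using this
      push_cast
      rw [div_le_iff₀ (by positivity : (0:ℝ) < 4 * ((n:ℝ) + 1))]
      nlinarith [h3sq, ih'', hnR, sq_nonneg (cb n), sq_nonneg (cb (n+1)),
        mul_le_mul_of_nonneg_left ih'' (sq_nonneg (2*(n:ℝ)+1)),
        mul_pos (mul_pos (by linarith : (0:ℝ) < 4*(n:ℝ)) (by linarith : (0:ℝ) < (n:ℝ)+1)) hp'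
      ]

lemma cb_conv (n : ℕ) : ∑ k ∈ Finset.range (n + 1), cb k * cb (n - k) = 1 := by
  induction n using Nat.strong_induction_on with
  | _ n ih =>
  match n with
  | 0 => simp [cb_zero]
  | (m+1) =>
    have refl1 : ∑ k ∈ Finset.range (m+2), ((m+1-k : ℕ) : ℝ) * (cb k * cb (m+1-k))
        = ∑ k ∈ Finset.range (m+2), (k : ℝ) * (cb k * cb (m+1-k)) := by
      rw [← Finset.sum_range_reflect]
      apply Finset.sum_congr rfl
      intro k hk
      simp only [Finset.mem_range] at hk
      have h1 : m + 2 - 1 - k = m + 1 - k := by omega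
      have h2 : m + 1 - (m + 1 - k) = k := by omega
      rw [h1, h2]
      ring
    have claim1 : ((m:ℝ)+1) * (∑ k ∈ Finset.range (m+2), cb k * cb (m+1-k))
        = 2 * ∑ k ∈ Finset.range (m+2), (k:ℝ) * (cb k * cb (m+1-k)) := by
      have expand : ∀ k ∈ Finset.range (m+2), ((m:ℝ)+1) * (cb k * cb (m+1-k))
          = ((m+1-k:ℕ):ℝ) * (cb k * cb (m+1-k)) + (k:ℝ) * (cb k * cb (m+1-k)) := by
        intro k hk
        simp only [Finset.mem_range] at hk
        have hk' : k ≤ m+1 := by omega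
        have hc : ((m+1-k:ℕ):ℝ) = (m:ℝ)+1-(k:ℝ) := by
          rw [Nat.cast_sub hk']; push_cast; ring
        rw [hc]; ring
      rw [Finset.mul_sum, Finset.sum_congr rfl expand, Finset.sum_add_distrib, refl1, two_mul]
    have claim2 : 2 * ∑ k ∈ Finset.range (m+2), (k:ℝ) * (cb k * cb (m+1-k))
        = ∑ j ∈ Finset.range (m+1), ((2*(j:ℝ)+1) * cb j) * cb (m-j) := by
      rw [Finset.sum_range_succ']
      simp only [Nat.cast_zero, zero_mul, add_zero]
      rw [Finset.mul_sum]
      apply Finset.sum_congr rfl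
      intro j hj
      have h1 : m + 1 - (j + 1) = m - j := by omega
      have hrec := cb_rec j
      rw [h1]
      push_cast
      calc 2 * (((j:ℝ) + 1) * (cb (j + 1) * cb (m - j)))
          = (2 * ((j:ℝ)+1) * cb (j+1)) * cb (m-j) := by ring
        _ = ((2*(j:ℝ)+1) * cb j) * cb (m-j) := by rw [hrec]
    have claim3 : ∑ j ∈ Finset.range (m+1), ((2*(j:ℝ)+1) * cb j) * cb (m-j)
        = ∑ j ∈ Finset.range (m+1), ∑ i ∈ Finset.range (j+1), cb i * cb (m-j) := by
      apply Finset.sum_congr rfl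
      intro j hj
      rw [← cb_sum j, Finset.sum_mul]
    have claim4 : ∑ j ∈ Finset.range (m+1), ∑ i ∈ Finset.range (j+1), cb i * cb (m-j)
        = ∑ s ∈ Finset.range (m+1), ∑ k ∈ Finset.range (s+1), cb k * cb (s-k) := by
      rw [Finset.sum_sigma', Finset.sum_sigma']
      refine Finset.sum_nbij' (fun p => ⟨m - p.1 + p.2, p.2⟩) (fun q => ⟨m - q.1 + q.2, q.2⟩)
        ?_ ?_ ?_ ?_ ?_
      · rintro ⟨j, i⟩ hp
        simp only [Finset.mem_sigma, Finset.mem_range] at hp ⊢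
        omega
      · rintro ⟨s, k⟩ hq
        simp only [Finset.mem_sigma, Finset.mem_range] at hq ⊢
        omega
      · rintro ⟨j, i⟩ hp
        simp only [Finset.mem_sigma, Finset.mem_range] at hp
        have h : m - (m - j + i) + i = j := by omega
        simp only [h]
      · rintro ⟨s, k⟩ hq
        simp only [Finset.mem_sigma, Finset.mem_range] at hq
        have h : m - (m - s + k) + k = s := by omega
        simp only [h]
      · rintro ⟨j, i⟩ hp
        simp only [Finset.mem_sigma, Finset.mem_range] at hp
        have h : m - j + i - i = m - j := by omega
        simp only [h]
    have claim5 : ∑ s ∈ Finset.range (m+1), ∑ k ∈ Finset.range (s+1), cb k * cb (s-k)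
        = (m:ℝ) + 1 := by
      rw [Finset.sum_congr rfl (fun s hs => ih s (by simp at hs; omega))]
      simp
    have hm2 : ((m:ℝ) + 1) ≠ 0 := by positivity
    have heq := claim1.trans (claim2.trans (claim3.trans (claim4.trans claim5)))
    have : (m:ℕ) + 1 + 1 = m + 2 := by omega
    rw [this]
    field_simp at heq
    linarith [heq]

lemma summable_cbu {u : ℂ} (hu : ‖u‖ < 1) : Summable (fun n => ‖(cb n : ℂ) * u ^ n‖) := by
  apply Summable.of_nonneg_of_le (fun n => norm_nonneg _) (fun n => ?_)
    (summable_geometric_of_lt_one (norm_nonneg u) hu)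
  rw [norm_mul, norm_pow]
  have h1 : ‖((cb n : ℝ) : ℂ)‖ = cb n := by
    rw [Complex.norm_real, Real.norm_eq_abs, abs_of_pos (cb_pos n)]
  rw [h1]
  calc cb n * ‖u‖ ^ n ≤ 1 * ‖u‖ ^ n := by
        apply mul_le_mul_of_nonneg_right (cb_le_one n) (by positivity)
    _ = ‖u‖ ^ n := one_mul _

noncomputable def fcb (u : ℂ) : ℂ := ∑' n, (cb n : ℂ) * u ^ n

lemma fcb_sq {u : ℂ} (hu : ‖u‖ < 1) : fcb u * fcb u = (1 - u)⁻¹ := by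
  rw [fcb, tsum_mul_tsum_eq_tsum_sum_range_of_summable_norm (summable_cbu hu) (summable_cbu hu)]
  rw [← tsum_geometric_of_norm_lt_one hu]
  congr 1
  ext n
  have : ∀ k ∈ Finset.range (n+1), ((cb k : ℂ) * u ^ k) * ((cb (n-k) : ℂ) * u ^ (n-k))
      = ((cb k * cb (n-k) : ℝ) : ℂ) * u ^ n := by
    intro k hk
    simp only [Finset.mem_range] at hk
    have : k + (n - k) = n := by omega
    push_cast
    rw [mul_mul_mul_comm, ← pow_add, this]
  rw [Finset.sum_congr rfl this, ← Finset.sum_mul, ← Complex.ofReal_sum, cb_conv n]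
  simp

lemma conj_fcb {u : ℂ} : (starRingEnd ℂ) (fcb u) = ∑' n, (cb n : ℂ) * ((starRingEnd ℂ) u) ^ n := by
  rw [fcb]
  have : (starRingEnd ℂ) (∑' (n : ℕ), (cb n : ℂ) * u ^ n)
      = ∑' (n : ℕ), star ((cb n : ℂ) * u ^ n) := by
    rw [← tsum_star]; rfl
  rw [this]
  congr 1
  ext n
  simp only [star_mul', star_pow, RCLike.star_def, Complex.conj_ofReal]

lemma key_expand {u : ℂ} (hu : ‖u‖ < 1) :
    ((‖(1:ℂ) - u‖⁻¹ : ℝ) : ℂ)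
      = ∑' p : ℕ × ℕ, ((cb p.1 : ℂ) * u ^ p.1) * ((cb p.2 : ℂ) * ((starRingEnd ℂ) u) ^ p.2) := by
  have hcu : ‖(starRingEnd ℂ) u‖ < 1 := by rwa [RCLike.norm_conj]
  have h1 : fcb u * (starRingEnd ℂ) (fcb u)
      = ∑' p : ℕ × ℕ, ((cb p.1 : ℂ) * u ^ p.1) * ((cb p.2 : ℂ) * ((starRingEnd ℂ) u) ^ p.2) := by
    rw [conj_fcb, fcb]
    exact tsum_mul_tsum_of_summable_norm (summable_cbu hu) (summable_cbu hcu)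
  rw [← h1, Complex.mul_conj]
  rw [Complex.normSq_eq_norm_sq]
  have habs : ‖fcb u‖ ^ 2 = ‖(1:ℂ) - u‖⁻¹ := by
    have : ‖fcb u‖ ^ 2 = ‖fcb u * fcb u‖ := by
      rw [norm_mul]; ring
    rw [this, fcb_sq hu, norm_inv]
  rw [habs]

lemma mem_circleC {z : EuclideanSpace ℂ (Fin 2)} (hz : z ∈ circleC) :
    ‖z 0‖ = 1 ∧ ∀ w : EuclideanSpace ℂ (Fin 2), ⟪w, z⟫ = (starRingEnd ℂ) (w 0) * (z 0) := by
  obtain ⟨ξ, hξ, rfl⟩ := hz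
  rw [mem_sphere_zero_iff_norm] at hξ
  refine ⟨hξ, fun w => ?_⟩
  rw [PiLp.inner_apply]
  simp [RCLike.inner_apply]
  ring

lemma energy_lb (ν : Measure (EuclideanSpace ℂ (Fin 2))) [IsProbabilityMeasure ν]
    (hν : ν circleCᶜ = 0) (r : ℝ) (hr0 : 0 ≤ r) (hr1 : r < 1) (N : ℕ) :
    r ^ (4*N) * ∑ n ∈ Finset.range (N+1), cb n ^ 2
      ≤ ∫ z, ∫ w, ‖(1 : ℂ) - ((r : ℝ) : ℂ) ^ 2 * ⟪w, z⟫‖⁻¹ ∂ν ∂ν := by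
  have haeC : ∀ᵐ z ∂ν, z ∈ circleC := by
    rw [MeasureTheory.ae_iff]
    exact hν
  set c : ℕ × ℕ → ℝ := fun p => cb p.1 * cb p.2 * r ^ (2*p.1 + 2*p.2) with hc_def
  have hc_nonneg : ∀ p, 0 ≤ c p := fun p => by
    have := cb_pos p.1; have := cb_pos p.2; positivity
  -- the moment integrals
  set B : ℕ × ℕ → ℂ := fun p => ∫ w, (starRingEnd ℂ) (w 0) ^ p.1 * (w 0) ^ p.2 ∂ν with hB_def
  set A : ℕ × ℕ → ℂ := fun p => ∫ z, (z 0) ^ p.1 * (starRingEnd ℂ) (z 0) ^ p.2 ∂ν with hA_def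
  have hcont_coord : Continuous (fun z : EuclideanSpace ℂ (Fin 2) => z 0) :=
    (EuclideanSpace.proj (0 : Fin 2)).continuous
  have hcont_momB : ∀ p : ℕ × ℕ,
      Continuous (fun w : EuclideanSpace ℂ (Fin 2) => (starRingEnd ℂ) (w 0) ^ p.1 * (w 0) ^ p.2) :=
    fun p => ((Complex.continuous_conj.comp hcont_coord).pow _).mul (hcont_coord.pow _)
  have hcont_momA : ∀ p : ℕ × ℕ,
      Continuous (fun z : EuclideanSpace ℂ (Fin 2) => (z 0) ^ p.1 * (starRingEnd ℂ) (z 0) ^ p.2) :=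
    fun p => (hcont_coord.pow _).mul ((Complex.continuous_conj.comp hcont_coord).pow _)
  have hmom_norm : ∀ (p : ℕ × ℕ) (w : EuclideanSpace ℂ (Fin 2)), w ∈ circleC →
      ‖(starRingEnd ℂ) (w 0) ^ p.1 * (w 0) ^ p.2‖ = 1 := by
    intro p w hw
    rw [norm_mul, norm_pow, norm_pow, RCLike.norm_conj, (mem_circleC hw).1]
    simp
  have hmomA_norm : ∀ (p : ℕ × ℕ) (z : EuclideanSpace ℂ (Fin 2)), z ∈ circleC →
      ‖(z 0) ^ p.1 * (starRingEnd ℂ) (z 0) ^ p.2‖ = 1 := by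
    intro p z hz
    rw [norm_mul, norm_pow, norm_pow, RCLike.norm_conj, (mem_circleC hz).1]
    simp
  have hint_momB : ∀ p : ℕ × ℕ,
      Integrable (fun w : EuclideanSpace ℂ (Fin 2) => (starRingEnd ℂ) (w 0) ^ p.1 * (w 0) ^ p.2) ν := by
    intro p
    refine (integrable_const (1:ℝ)).mono' ((hcont_momB p).aestronglyMeasurable) ?_
    filter_upwards [haeC] with w hw
    rw [hmom_norm p w hw]
  have hB_le : ∀ p, ‖B p‖ ≤ 1 := by
    intro p
    rw [hB_def]
    calc ‖∫ w, (starRingEnd ℂ) (w 0) ^ p.1 * (w 0) ^ p.2 ∂ν‖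
        ≤ ∫ w, (1:ℝ) ∂ν := by
          apply norm_integral_le_of_norm_le (integrable_const 1)
          filter_upwards [haeC] with w hw
          rw [hmom_norm p w hw]
      _ = 1 := by simp
  -- summability of the coefficient family
  have hd_sum : Summable (fun n : ℕ => cb n * r ^ (2*n)) := by
    apply Summable.of_nonneg_of_le (fun n => by have := cb_pos n; positivity) (fun n => ?_)
      (summable_geometric_of_lt_one (by positivity) (by nlinarith : r^2 < 1))
    calc cb n * r ^ (2*n) ≤ 1 * r ^ (2*n) :=
          mul_le_mul_of_nonneg_right (cb_le_one n) (by positivity)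
      _ = (r^2)^n := by rw [one_mul, ← pow_mul]
  have hsum_c : Summable c := by
    have : c = fun p : ℕ × ℕ => (cb p.1 * r ^ (2*p.1)) * (cb p.2 * r ^ (2*p.2)) := by
      funext p
      simp only [hc_def]
      rw [pow_add]
      ring
    rw [this]
    exact hd_sum.mul_of_nonneg hd_sum (fun n => by have := cb_pos n; positivity)
      (fun n => by have := cb_pos n; positivity)
  have hsum_top : (∑' p : ℕ × ℕ, ENNReal.ofReal (c p)) ≠ ⊤ := by
    rw [← ENNReal.ofReal_tsum_of_nonneg hc_nonneg hsum_c]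
    exact ENNReal.ofReal_ne_top
  -- inner expansion
  have key_inner : ∀ z ∈ circleC,
      ((∫ w, ‖(1 : ℂ) - ((r : ℝ) : ℂ) ^ 2 * ⟪w, z⟫‖⁻¹ ∂ν : ℝ) : ℂ)
        = ∑' p : ℕ × ℕ,
            (((c p : ℝ) : ℂ) * ((z 0) ^ p.1 * (starRingEnd ℂ) (z 0) ^ p.2)) * B p := by
    intro z hz
    obtain ⟨hz1, hz2⟩ := mem_circleC hz
    have h0 : ((∫ w, ‖(1 : ℂ) - ((r : ℝ) : ℂ) ^ 2 * ⟪w, z⟫‖⁻¹ ∂ν : ℝ) : ℂ)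
        = ∫ w, ((‖(1 : ℂ) - ((r : ℝ) : ℂ) ^ 2 * ⟪w, z⟫‖⁻¹ : ℝ) : ℂ) ∂ν := integral_ofReal.symm
    rw [h0]
    have step1 : ∫ w, ((‖(1 : ℂ) - ((r : ℝ) : ℂ) ^ 2 * ⟪w, z⟫‖⁻¹ : ℝ) : ℂ) ∂ν
        = ∫ w, ∑' p : ℕ × ℕ,
            ((((c p : ℝ) : ℂ) * ((z 0) ^ p.1 * (starRingEnd ℂ) (z 0) ^ p.2))
              * ((starRingEnd ℂ) (w 0) ^ p.1 * (w 0) ^ p.2)) ∂ν := by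
      apply integral_congr_ae
      filter_upwards [haeC] with w hw
      obtain ⟨hw1, _⟩ := mem_circleC hw
      have hu : ‖((r : ℝ) : ℂ) ^ 2 * ⟪w, z⟫‖ < 1 := by
        rw [norm_mul, hz2 w, norm_mul, RCLike.norm_conj, hw1, hz1, norm_pow,
          Complex.norm_real, Real.norm_eq_abs, _root_.abs_of_nonneg hr0]
        nlinarith
      rw [key_expand hu]
      congr 1
      funext p
      rw [hz2 w]
      have hconj : (starRingEnd ℂ) (((r : ℝ) : ℂ) ^ 2 * ((starRingEnd ℂ) (w 0) * (z 0)))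
          = ((r : ℝ) : ℂ) ^ 2 * ((w 0) * (starRingEnd ℂ) (z 0)) := by
        rw [map_mul, map_pow, Complex.conj_ofReal, map_mul, Complex.conj_conj]
      rw [hconj]
      simp only [hc_def]
      push_cast
      rw [mul_pow, mul_pow, mul_pow, mul_pow, ← pow_mul, ← pow_mul, pow_add]
      ring
    rw [step1]
    rw [integral_tsum]
    · congr 1
      funext p
      rw [integral_const_mul]
    · intro p
      exact (Continuous.aestronglyMeasurable (by
        exact continuous_const.mul (hcont_momB p)))
    · refine ne_top_of_le_ne_top hsum_top (ENNReal.tsum_le_tsum fun p => ?_)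
      have hb : ∀ᵐ w ∂ν, (‖(((c p : ℝ) : ℂ) * ((z 0) ^ p.1 * (starRingEnd ℂ) (z 0) ^ p.2))
            * ((starRingEnd ℂ) (w 0) ^ p.1 * (w 0) ^ p.2)‖₊ : ℝ≥0∞) ≤ ENNReal.ofReal (c p) := by
        filter_upwards [haeC] with w hw
        rw [← enorm_eq_nnnorm, ← ofReal_norm]
        apply ENNReal.ofReal_le_ofReal
        rw [norm_mul, norm_mul, hmom_norm p w hw, hmomA_norm p z hz, Complex.norm_real,
          Real.norm_eq_abs, _root_.abs_of_nonneg (hc_nonneg p)]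
        simp
      calc ∫⁻ w, ‖(((c p : ℝ) : ℂ) * ((z 0) ^ p.1 * (starRingEnd ℂ) (z 0) ^ p.2))
              * ((starRingEnd ℂ) (w 0) ^ p.1 * (w 0) ^ p.2)‖₊ ∂ν
          ≤ ∫⁻ _, ENNReal.ofReal (c p) ∂ν := lintegral_mono_ae hb
        _ = ENNReal.ofReal (c p) := by simp
  -- bound on A
  have hA_le : ∀ p, ‖A p‖ ≤ 1 := by
    intro p
    rw [hA_def]
    calc ‖∫ z, (z 0) ^ p.1 * (starRingEnd ℂ) (z 0) ^ p.2 ∂ν‖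
        ≤ ∫ _, (1:ℝ) ∂ν := by
          apply norm_integral_le_of_norm_le (integrable_const 1)
          filter_upwards [haeC] with z hz
          rw [hmomA_norm p z hz]
      _ = 1 := by simp
  -- the full expansion of the energy
  set t : ℕ × ℕ → ℝ := fun p => c p * Complex.normSq (A p) with ht_def
  have ht_nonneg : ∀ p, 0 ≤ t p := fun p =>
    mul_nonneg (hc_nonneg p) (Complex.normSq_nonneg _)
  have ht_le : ∀ p, t p ≤ c p := by
    intro p
    have h1 : Complex.normSq (A p) ≤ 1 := by
      rw [Complex.normSq_eq_norm_sq]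
      exact pow_le_one₀ (norm_nonneg _) (hA_le p)
    calc t p = c p * Complex.normSq (A p) := rfl
      _ ≤ c p * 1 := mul_le_mul_of_nonneg_left h1 (hc_nonneg p)
      _ = c p := mul_one _
  have ht_sum : Summable t := by
    apply Summable.of_norm_bounded hsum_c
    intro p
    rw [Real.norm_eq_abs, _root_.abs_of_nonneg (ht_nonneg p)]
    exact ht_le p
  have Ereal : (∫ z, ∫ w, ‖(1 : ℂ) - ((r : ℝ) : ℂ) ^ 2 * ⟪w, z⟫‖⁻¹ ∂ν ∂ν) = ∑' p, t p := by
    apply Complex.ofReal_injective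
    have h0 : ((∫ z, ∫ w, ‖(1 : ℂ) - ((r : ℝ) : ℂ) ^ 2 * ⟪w, z⟫‖⁻¹ ∂ν ∂ν : ℝ) : ℂ)
        = ∫ z, ((∫ w, ‖(1 : ℂ) - ((r : ℝ) : ℂ) ^ 2 * ⟪w, z⟫‖⁻¹ ∂ν : ℝ) : ℂ) ∂ν :=
      integral_ofReal.symm
    rw [h0]
    have h1 : ∫ z, ((∫ w, ‖(1 : ℂ) - ((r : ℝ) : ℂ) ^ 2 * ⟪w, z⟫‖⁻¹ ∂ν : ℝ) : ℂ) ∂ν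
        = ∫ z, ∑' p : ℕ × ℕ,
            (((c p : ℝ) : ℂ) * ((z 0) ^ p.1 * (starRingEnd ℂ) (z 0) ^ p.2)) * B p ∂ν := by
      apply integral_congr_ae
      filter_upwards [haeC] with z hz
      exact key_inner z hz
    rw [h1]
    rw [integral_tsum]
    · rw [Complex.ofReal_tsum]
      congr 1
      funext p
      have heq : ∀ z : EuclideanSpace ℂ (Fin 2),
          (((c p : ℝ) : ℂ) * ((z 0) ^ p.1 * (starRingEnd ℂ) (z 0) ^ p.2)) * B p
          = (((c p : ℝ) : ℂ) * B p) * ((z 0) ^ p.1 * (starRingEnd ℂ) (z 0) ^ p.2) := by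
        intro z; ring
      simp only [heq]
      rw [integral_const_mul]
      have hBA : B p = (starRingEnd ℂ) (A p) := by
        have hb1 : B p = ∫ w, (starRingEnd ℂ) (w 0) ^ p.1 * (w 0) ^ p.2 ∂ν := rfl
        have hb2 : A p = ∫ z, (z 0) ^ p.1 * (starRingEnd ℂ) (z 0) ^ p.2 ∂ν := rfl
        rw [hb1, hb2, ← integral_conj]
        apply integral_congr_ae
        apply Filter.Eventually.of_forall
        intro z
        simp only [map_mul, map_pow, Complex.conj_conj]
      rw [hBA]
      have hre : (((c p : ℝ) : ℂ) * (starRingEnd ℂ) (A p)) * A p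
          = ((c p : ℝ) : ℂ) * ((starRingEnd ℂ) (A p) * A p) := by ring
      rw [hre, ← Complex.normSq_eq_conj_mul_self]
      simp only [ht_def]
      push_cast
      ring
    · intro p
      exact (continuous_const.mul (hcont_momA p)).mul continuous_const
        |>.aestronglyMeasurable
    · refine ne_top_of_le_ne_top hsum_top (ENNReal.tsum_le_tsum fun p => ?_)
      have hb : ∀ᵐ z ∂ν, (‖(((c p : ℝ) : ℂ) * ((z 0) ^ p.1 * (starRingEnd ℂ) (z 0) ^ p.2))
            * B p‖₊ : ℝ≥0∞) ≤ ENNReal.ofReal (c p) := by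
        filter_upwards [haeC] with z hz
        rw [← enorm_eq_nnnorm, ← ofReal_norm]
        apply ENNReal.ofReal_le_ofReal
        rw [norm_mul, norm_mul, hmomA_norm p z hz, Complex.norm_real,
          Real.norm_eq_abs, _root_.abs_of_nonneg (hc_nonneg p), mul_one]
        exact mul_le_of_le_one_right (hc_nonneg p) (hB_le p)
      calc ∫⁻ z, ‖(((c p : ℝ) : ℂ) * ((z 0) ^ p.1 * (starRingEnd ℂ) (z 0) ^ p.2)) * B p‖₊ ∂ν
          ≤ ∫⁻ _, ENNReal.ofReal (c p) ∂ν := lintegral_mono_ae hb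
        _ = ENNReal.ofReal (c p) := by simp
  -- diagonal moments are 1
  have hAnn : ∀ n : ℕ, A (n, n) = 1 := by
    intro n
    have hAnn' : A (n, n) = ∫ z, (z 0) ^ n * (starRingEnd ℂ) (z 0) ^ n ∂ν := rfl
    rw [hAnn']
    have hone : ∀ᵐ z ∂ν, (z 0) ^ n * (starRingEnd ℂ) (z 0) ^ n = 1 := by
      filter_upwards [haeC] with z hz
      rw [← mul_pow, Complex.mul_conj]
      have h2 : Complex.normSq (z 0) = 1 := by
        rw [Complex.normSq_eq_norm_sq, (mem_circleC hz).1, one_pow]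
      rw [h2]
      simp
    rw [integral_congr_ae hone]
    simp
  -- conclude
  have hdiag_nonneg : ∀ p ∉ (Finset.range (N+1)).image (fun n => (n, n)), 0 ≤ t p :=
    fun p _ => ht_nonneg p
  have hdiag := Summable.sum_le_tsum ((Finset.range (N+1)).image (fun n => (n, n)))
    hdiag_nonneg ht_sum
  have hinj : ∀ a ∈ Finset.range (N+1), ∀ b ∈ Finset.range (N+1),
      (a, a) = (b, b) → a = b := by
    intro a _ b _ h
    exact (Prod.ext_iff.mp h).1
  rw [Finset.sum_image hinj] at hdiag
  have hterm : ∀ n ∈ Finset.range (N+1), r ^ (4*N) * cb n ^ 2 ≤ t (n, n) := by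
    intro n hn
    simp only [Finset.mem_range] at hn
    have h1 : t (n, n) = cb n ^ 2 * r ^ (2*n + 2*n) := by
      simp only [ht_def, hc_def, hAnn n, Complex.normSq_one]
      ring
    rw [h1]
    have h2 : r ^ (4*N) ≤ r ^ (2*n + 2*n) :=
      pow_le_pow_of_le_one hr0 hr1.le (by omega)
    calc r ^ (4*N) * cb n ^ 2 ≤ r ^ (2*n + 2*n) * cb n ^ 2 :=
          mul_le_mul_of_nonneg_right h2 (sq_nonneg _)
      _ = cb n ^ 2 * r ^ (2*n + 2*n) := by ring
  calc r ^ (4*N) * ∑ n ∈ Finset.range (N+1), cb n ^ 2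
      = ∑ n ∈ Finset.range (N+1), r ^ (4*N) * cb n ^ 2 := Finset.mul_sum _ _ _
    _ ≤ ∑ n ∈ Finset.range (N+1), t (n, n) := Finset.sum_le_sum hterm
    _ ≤ ∑' p, t p := hdiag
    _ = _ := Ereal.symm

/-- Every probability measure `ν` supported on the circle `C = {(z,0) : |z|=1} ⊆ ∂𝔹₂` has
infinite energy with respect to the modulus of the Drury–Arveson kernel
`|K(z,w)| = |1 − ⟨z,w⟩|⁻¹`; hence `C` has capacity zero for that kernel. -/
theorem stmt9 (ν : Measure (EuclideanSpace ℂ (Fin 2))) [IsProbabilityMeasure ν]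
    (hν : ν circleCᶜ = 0) :
    (⨆ r : {r : ℝ // 0 ≤ r ∧ r < 1},
        ENNReal.ofReal (∫ z, ∫ w, ‖(1 : ℂ) - ((r : ℝ) : ℂ) ^ 2 * ⟪w, z⟫‖⁻¹ ∂ν ∂ν)) = ⊤ := by
  rw [iSup_eq_top]
  intro b hb
  set M : ℝ := b.toReal with hM
  have hM0 : 0 ≤ M := ENNReal.toReal_nonneg
  obtain ⟨N, hN⟩ :=
    (Real.tendsto_sum_range_one_div_nat_succ_atTop.eventually_ge_atTop (8*(M+1))).exists
  have hsumcb : 2*(M+1) ≤ ∑ n ∈ Finset.range (N+1), cb n ^ 2 := by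
    have h1 : ∑ n ∈ Finset.range (N+1), cb n ^ 2
        = (∑ i ∈ Finset.range N, cb (i+1) ^ 2) + cb 0 ^ 2 := Finset.sum_range_succ' _ N
    have h2 : ∀ i ∈ Finset.range N, (1/4) * (1/((i:ℝ)+1)) ≤ cb (i+1) ^ 2 := by
      intro i _
      have h3 := cb_sq_ge (i+1) (by omega)
      have h4 : (1:ℝ)/4 * (1/((i:ℝ)+1)) = 1 / (4 * ((i+1:ℕ):ℝ)) := by
        push_cast; field_simp
      rw [h4]
      exact h3
    calc 2*(M+1) = (1/4) * (8*(M+1)) := by ring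
      _ ≤ (1/4) * ∑ i ∈ Finset.range N, 1/((i:ℝ)+1) := by
          apply mul_le_mul_of_nonneg_left _ (by norm_num)
          simpa using hN
      _ = ∑ i ∈ Finset.range N, (1/4) * (1/((i:ℝ)+1)) := Finset.mul_sum _ _ _
      _ ≤ ∑ i ∈ Finset.range N, cb (i+1) ^ 2 := Finset.sum_le_sum h2
      _ ≤ (∑ i ∈ Finset.range N, cb (i+1) ^ 2) + cb 0 ^ 2 := le_add_of_nonneg_right (sq_nonneg _)
      _ = ∑ n ∈ Finset.range (N+1), cb n ^ 2 := h1.symm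
  set ε : ℝ := 1/(8*(N:ℝ)+8) with hε
  have hεpos : 0 < ε := by positivity
  have hεle : ε ≤ 1/8 := by
    rw [hε]
    apply one_div_le_one_div_of_le (by norm_num)
    have : (0:ℝ) ≤ (N:ℝ) := Nat.cast_nonneg N
    linarith
  set r : ℝ := 1 - ε with hr
  have hr0 : 0 ≤ r := by rw [hr]; linarith
  have hr1 : r < 1 := by rw [hr]; linarith
  have hpow : (1:ℝ)/2 ≤ r ^ (4*N) := by
    have hb2 : (-2 : ℝ) ≤ -ε := by linarith
    have h5 := one_add_mul_le_pow hb2 (4*N)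
    have h6 : (1:ℝ) + (4*N : ℕ) * (-ε) = 1 - (4*(N:ℝ)) * ε := by push_cast; ring
    have h7 : (1:ℝ) + -ε = r := by rw [hr]; ring
    rw [h6, h7] at h5
    have h8 : 4*(N:ℝ) * ε ≤ 1/2 := by
      rw [hε, mul_one_div, div_le_iff₀ (by positivity : (0:ℝ) < 8*(N:ℝ)+8)]
      have : (0:ℝ) ≤ (N:ℝ) := Nat.cast_nonneg N
      linarith
    linarith
  refine ⟨⟨r, hr0, hr1⟩, ?_⟩
  rw [ENNReal.lt_ofReal_iff_toReal_lt hb.ne]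
  have hE := energy_lb ν hν r hr0 hr1 N
  calc M < M + 1 := lt_add_one M
    _ = (1/2) * (2*(M+1)) := by ring
    _ ≤ r ^ (4*N) * ∑ n ∈ Finset.range (N+1), cb n ^ 2 := by
        apply mul_le_mul hpow hsumcb (by linarith) (by positivity)
    _ ≤ _ := hE
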